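/- Shortest-path tree structure under the uniqueness assumption: assume the uniqueness assumption holds. Let v be a vertex with d(v) < ⊤, and let u, u' be vertices such that the shortest path to v visits u and the shortest path to v visits u'. Then the shortest path to u' visits u, or the shortest path to u visits u'. -/

import Mathlib

open scoped ENNReal

namespace SSSP

variable {V : Type*}

/-- The weight of a walk (a list of vertices): the sum of `w` over consecutive pairs.
A one-vertex walk has weight 0. -/
noncomputable def walkWeight (w : V → V → ℝ≥0∞) : List V → ℝ≥0∞
  | [] => 0
  | [_] => 0
  | a :: b :: p => w a b + walkWeight w (b :: p)

/-- `p` is a walk from `u` to `v`: a nonempty list beginning at `u` and ending at `v`. -/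
def IsWalk (u v : V) (p : List V) : Prop :=
  p ≠ [] ∧ p.head? = some u ∧ p.getLast? = some v

/-- The distance from `u` to `v`: the infimum of the weights of all walks from `u` to `v`. -/
noncomputable def dist (w : V → V → ℝ≥0∞) (u v : V) : ℝ≥0∞ :=
  ⨅ p : {p : List V // IsWalk u v p}, walkWeight w p.1

/-- The shortest path (from `s`) to `v` visits `u`. -/
def Visits (w : V → V → ℝ≥0∞) (s u v : V) : Prop :=
  dist w s u + dist w u v = dist w s v

/-- The uniqueness assumption: any two distinct walks starting from `s` with finite
weight have different weights. -/
def UniqueWeights (w : V → V → ℝ≥0∞) (s : V) : Prop :=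
  ∀ p q : List V, p ≠ [] → q ≠ [] → p.head? = some s → q.head? = some s →
    walkWeight w p ≠ ⊤ → walkWeight w q ≠ ⊤ → walkWeight w p = walkWeight w q → p = q

/-- The relaxation operator. -/
noncomputable def relax (w : V → V → ℝ≥0∞) (f : V → ℝ≥0∞) : V → ℝ≥0∞ :=
  fun v => min (f v) (⨅ u, f u + w u v)

end SSSP

namespace SSSP

variable {V : Type*}

lemma walkWeight_append_cons (w : V → V → ℝ≥0∞) (x : V) (q : List V) :
    ∀ p : List V, walkWeight w (p ++ x :: q) = walkWeight w (p ++ [x]) + walkWeight w (x :: q)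
  | [] => by simp [walkWeight]
  | [a] => by
      cases q with
      | nil => simp [walkWeight]
      | cons b q' => simp [walkWeight, add_assoc]
  | a :: b :: p => by
      simp only [List.cons_append, List.append_eq, walkWeight]
      have ih := walkWeight_append_cons w x q (b :: p)
      simp only [List.cons_append] at ih
      rw [ih, add_assoc]

lemma isWalk_pair (u v : V) : IsWalk u v [u, v] := by
  refine ⟨by simp, by simp, by simp⟩

lemma walk_nonempty (w : V → V → ℝ≥0∞) (u v : V) : Nonempty {p : List V // IsWalk u v p} :=
  ⟨⟨[u, v], isWalk_pair u v⟩⟩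

lemma dist_le_walkWeight (w : V → V → ℝ≥0∞) {u v : V} {p : List V} (h : IsWalk u v p) :
    dist w u v ≤ walkWeight w p :=
  iInf_le (fun q : {p : List V // IsWalk u v p} => walkWeight w q.1) ⟨p, h⟩

lemma dist_self_le (w : V → V → ℝ≥0∞) (u : V) : dist w u u = 0 :=
  le_antisymm (by simpa [walkWeight] using dist_le_walkWeight w (⟨by simp, by simp, by simp⟩ : IsWalk u u [u])) zero_le

/-- Concatenation of walks. -/
lemma isWalk_append (w : V → V → ℝ≥0∞) {a b c : V} {p q : List V}
    (hp : IsWalk a b p) (hq : IsWalk b c q) :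
    IsWalk a c (p ++ q.tail) ∧
      walkWeight w (p ++ q.tail) = walkWeight w p + walkWeight w q := by
  obtain ⟨hpne, hphead, hplast⟩ := hp
  obtain ⟨hqne, hqhead, hqlast⟩ := hq
  cases q with
  | nil => exact absurd rfl hqne
  | cons b' q' =>
    have hb : b = b' := by simpa using hqhead.symm
    subst hb
    cases q' with
    | nil =>
      simp only [List.getLast?_singleton, Option.some.injEq] at hqlast
      subst hqlast
      simpa [walkWeight] using ⟨hpne, hphead, hplast⟩
    | cons y q'' =>
      -- p = p.dropLast ++ [b]
      have hsplit : p.dropLast ++ [b] = p := List.dropLast_append_getLast? b hplast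
      constructor
      · refine ⟨by simp [hpne], ?_, ?_⟩
        · rw [List.tail_cons, List.head?_append_of_ne_nil _ hpne]
          exact hphead
        · rw [List.tail_cons, List.getLast?_append_of_ne_nil _ (by simp)]
          simpa using hqlast
      · rw [List.tail_cons, ← hsplit, List.append_assoc, List.singleton_append,
          walkWeight_append_cons]

/-- Triangle inequality. -/
lemma dist_triangle (w : V → V → ℝ≥0∞) (a b c : V) :
    dist w a c ≤ dist w a b + dist w b c := by
  have h : dist w a b + dist w b c
      = ⨅ (p : {p : List V // IsWalk a b p}) (q : {q : List V // IsWalk b c q}),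
          walkWeight w p.1 + walkWeight w q.1 := by
    unfold dist
    rw [ENNReal.iInf_add]
    exact iInf_congr fun p => ENNReal.add_iInf
  rw [h]
  refine le_iInf fun p => le_iInf fun q => ?_
  obtain ⟨hw, heq⟩ := isWalk_append w p.2 q.2
  exact heq ▸ dist_le_walkWeight w hw

/-- Every walk is dominated by a duplicate-free walk with the same endpoints. -/
lemma exists_nodup_walk (w : V → V → ℝ≥0∞) :
    ∀ (n : ℕ) (p : List V), p.length ≤ n → p ≠ [] →
      ∃ q : List V, q ≠ [] ∧ q.head? = p.head? ∧ q.getLast? = p.getLast? ∧ q.Nodup ∧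
        walkWeight w q ≤ walkWeight w p ∧ q ⊆ p := by
  intro n
  induction n with
  | zero => intro p hl hne; simp [List.length_eq_zero_iff] at hl; exact absurd hl hne
  | succ n ih =>
    intro p hl hne
    cases p with
    | nil => exact absurd rfl hne
    | cons a rest =>
      by_cases ha : a ∈ rest
      · obtain ⟨r1, r2, hr⟩ := List.append_of_mem ha
        subst hr
        have hdecomp : a :: (r1 ++ a :: r2) = (a :: r1) ++ a :: r2 := by simp
        have hwle : walkWeight w (a :: r2) ≤ walkWeight w (a :: (r1 ++ a :: r2)) := by
          rw [hdecomp, walkWeight_append_cons]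
          exact le_add_self
        have hlen : (a :: r2).length ≤ n := by
          simp only [List.length_cons, List.length_append] at hl ⊢
          omega
        obtain ⟨q, hq1, hq2, hq3, hq4, hq5, hq6⟩ := ih (a :: r2) hlen (by simp)
        refine ⟨q, hq1, by simpa using hq2, ?_, hq4, le_trans hq5 hwle, ?_⟩
        · rw [hq3, hdecomp, List.getLast?_append_of_ne_nil _ (by simp)]
        · intro x hx
          have := hq6 hx
          simp only [List.mem_cons, List.mem_append] at this ⊢
          tauto
      · cases rest with
        | nil =>
          exact ⟨[a], by simp, rfl, rfl, List.nodup_singleton a, le_refl _, by simp⟩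
        | cons b rest' =>
          obtain ⟨q, hq1, hq2, hq3, hq4, hq5, hq6⟩ :=
            ih (b :: rest') (by simpa using Nat.le_of_succ_le_succ hl) (by simp)
          cases q with
          | nil => exact absurd rfl hq1
          | cons b' q' =>
            have hb : b = b' := by simpa using hq2.symm
            subst hb
            have hanq : a ∉ b :: q' := fun hmem => ha (hq6 hmem)
            refine ⟨a :: b :: q', by simp, by simp, ?_, ?_, ?_, ?_⟩
            · rw [List.getLast?_cons_cons, hq3, List.getLast?_cons_cons]
            · exact List.nodup_cons.mpr ⟨hanq, hq4⟩
            · show w a b + walkWeight w (b :: q') ≤ w a b + walkWeight w (b :: rest')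
              exact add_le_add_right hq5 _
            · intro x hx
              rcases List.mem_cons.mp hx with h | h
              · simp [h]
              · simp [List.mem_cons, hq6 h]

/-- The distance is attained by some walk. -/
lemma exists_shortest_walk [Fintype V] (w : V → V → ℝ≥0∞) (a b : V) :
    ∃ p : List V, IsWalk a b p ∧ walkWeight w p = dist w a b := by
  classical
  set S : Set (List V) := {q | IsWalk a b q ∧ q.Nodup} with hS
  have hfin : S.Finite := by
    apply (List.finite_length_le V (Fintype.card V)).subset
    intro q hq
    exact hq.2.length_le_card
  have hne : S.Nonempty := by
    obtain ⟨q, hq1, hq2, hq3, hq4, _, _⟩ :=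
      exists_nodup_walk w ([a, b]).length [a, b] le_rfl (by simp)
    exact ⟨q, ⟨⟨hq1, by simpa using hq2, by simpa using hq3⟩, hq4⟩⟩
  obtain ⟨p, hpS, hmin⟩ := Set.exists_min_image S (walkWeight w) hfin hne
  refine ⟨p, hpS.1, le_antisymm ?_ (dist_le_walkWeight w hpS.1)⟩
  refine le_iInf fun r => ?_
  obtain ⟨hrne, hrhead, hrlast⟩ := r.2
  obtain ⟨q, hq1, hq2, hq3, hq4, hq5, _⟩ :=
    exists_nodup_walk w r.1.length r.1 le_rfl hrne
  exact le_trans (hmin q ⟨⟨hq1, hq2.trans hrhead, hq3.trans hrlast⟩, hq4⟩) hq5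

/-- Key step: if a shortest walk to `u` is a prefix of a shortest walk to `u'`,
then the shortest path to `u'` visits `u`. -/
lemma visits_of_prefix (w : V → V → ℝ≥0∞) (s u u' : V) {P Q : List V}
    (hP : IsWalk s u P) (hPw : walkWeight w P = dist w s u)
    (hQ : IsWalk s u' Q) (hQw : walkWeight w Q = dist w s u')
    (hfin : dist w s u' ≠ ⊤) (hpre : P <+: Q) :
    Visits w s u u' := by
  obtain ⟨r, hr⟩ := hpre
  cases r with
  | nil =>
    rw [List.append_nil] at hr
    subst hr
    obtain rfl : u = u' := Option.some.inj (hP.2.2.symm.trans hQ.2.2)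
    unfold Visits
    rw [dist_self_le, add_zero]
  | cons y r' =>
    -- P = P.dropLast ++ [u]
    have hsplit : P.dropLast ++ [u] = P := List.dropLast_append_getLast? u hP.2.2
    have hQdecomp : Q = P.dropLast ++ u :: (y :: r') := by
      rw [← hr, ← hsplit]; simp
    have hQweq : walkWeight w Q = walkWeight w P + walkWeight w (u :: y :: r') := by
      rw [hQdecomp, walkWeight_append_cons, hsplit]
    have hwalk : IsWalk u u' (u :: y :: r') := by
      refine ⟨by simp, by simp, ?_⟩
      have := hQ.2.2
      rw [hQdecomp, List.getLast?_append_of_ne_nil _ (by simp)] at this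
      exact this
    have h1 : dist w s u' = dist w s u + walkWeight w (u :: y :: r') := by
      rw [← hQw, hQweq, hPw]
    have h2 : dist w s u + dist w u u' ≤ dist w s u' := by
      rw [h1]
      exact add_le_add_right (dist_le_walkWeight w hwalk) _
    exact le_antisymm h2 (dist_triangle w s u u')

end SSSP

namespace SSSP

/-- Shortest-path tree structure under the uniqueness assumption: two vertices visited
by the shortest path to `v` are comparable in the visiting relation. -/
theorem visits_comparable {V : Type*} [Fintype V] (w : V → V → ℝ≥0∞) (s : V)
    (huniq : UniqueWeights w s) (v u u' : V)
    (hfin : dist w s v < ⊤)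
    (hu : Visits w s u v) (hu' : Visits w s u' v) :
    Visits w s u u' ∨ Visits w s u' u := by
  have hfv : dist w s v ≠ ⊤ := hfin.ne
  have hfu : dist w s u ≠ ⊤ := by
    intro h; apply hfv; rw [← hu, h, top_add]
  have hfuv : dist w u v ≠ ⊤ := by
    intro h; apply hfv; rw [← hu, h, add_top]
  have hfu' : dist w s u' ≠ ⊤ := by
    intro h; apply hfv; rw [← hu', h, top_add]
  have hfu'v : dist w u' v ≠ ⊤ := by
    intro h; apply hfv; rw [← hu', h, add_top]
  obtain ⟨P, hPwalk, hPw⟩ := exists_shortest_walk w s v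
  obtain ⟨P1, hP1walk, hP1w⟩ := exists_shortest_walk w s u
  obtain ⟨P2, hP2walk, hP2w⟩ := exists_shortest_walk w u v
  obtain ⟨Q1, hQ1walk, hQ1w⟩ := exists_shortest_walk w s u'
  obtain ⟨Q2, hQ2walk, hQ2w⟩ := exists_shortest_walk w u' v
  obtain ⟨hPPwalk, hPPw⟩ := isWalk_append w hP1walk hP2walk
  obtain ⟨hQQwalk, hQQw⟩ := isWalk_append w hQ1walk hQ2walk
  have hPPw' : walkWeight w (P1 ++ P2.tail) = dist w s v := by
    rw [hPPw, hP1w, hP2w]; exact hu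
  have hQQw' : walkWeight w (Q1 ++ Q2.tail) = dist w s v := by
    rw [hQQw, hQ1w, hQ2w]; exact hu'
  have hPeq : P1 ++ P2.tail = P :=
    huniq _ _ hPPwalk.1 hPwalk.1 hPPwalk.2.1 hPwalk.2.1
      (by rw [hPPw']; exact hfv) (by rw [hPw]; exact hfv) (by rw [hPPw', hPw])
  have hQeq : Q1 ++ Q2.tail = P :=
    huniq _ _ hQQwalk.1 hPwalk.1 hQQwalk.2.1 hPwalk.2.1
      (by rw [hQQw']; exact hfv) (by rw [hPw]; exact hfv) (by rw [hQQw', hPw])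
  have hP1pre : P1 <+: P := ⟨P2.tail, hPeq⟩
  have hQ1pre : Q1 <+: P := ⟨Q2.tail, hQeq⟩
  rcases le_total P1.length Q1.length with hle | hle
  · left
    exact visits_of_prefix w s u u' hP1walk hP1w hQ1walk hQ1w hfu'
      (List.prefix_of_prefix_length_le hP1pre hQ1pre hle)
  · right
    exact visits_of_prefix w s u' u hQ1walk hQ1w hP1walk hP1w hfu
      (List.prefix_of_prefix_length_le hQ1pre hP1pre hle)

end SSSP
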